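/- arXiv:1108.3580 — 7 statements merged into one kernel-verified Lean document; each statement's English description precedes it below -/
import Mathlib

section
/- Let R be a commutative ring and let n be an odd natural number. If A is a symmetric n×n matrix over R (Aᵀ = A) all of whose diagonal entries lie in 2R (for every i there is b ∈ R with A i i = 2b), then det A lies in 2R, i.e. 2 divides det A in R. -/
open Matrix

/-- If `A` is a symmetric `n × n` matrix over a commutative ring `R`
with `n` odd and every diagonal entry of `A` lying in `2R`, then `2 ∣ det A`. -/
theorem det_dvd_two_of_symm_even_diag {R : Type*} [CommRing R] {n : ℕ} (hn : Odd n)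
    (A : Matrix (Fin n) (Fin n) R) (hsym : Aᵀ = A)
    (hdiag : ∀ i, ∃ b : R, A i i = 2 * b) :
    (2 : R) ∣ A.det := by
  classical
  set I : Ideal R := Ideal.span {(2 : R)}
  set φ : R →+* R ⧸ I := Ideal.Quotient.mk I
  rw [← Ideal.mem_span_singleton, ← Ideal.Quotient.eq_zero_iff_mem (I := I)]
  have : φ A.det = ((A.map φ).det) := RingHom.map_det φ A
  rw [show Ideal.Quotient.mk I A.det = φ A.det from rfl, this]
  set M : Matrix (Fin n) (Fin n) (R ⧸ I) := A.map φ
  have h2 : (2 : R ⧸ I) = 0 := by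
    have : φ (2 : R) = 0 := by
      rw [Ideal.Quotient.eq_zero_iff_mem]
      exact Ideal.subset_span rfl
    rwa [show φ (2:R) = 2 from map_ofNat φ 2] at this
  have hMsym : ∀ i j, M i j = M j i := by
    intro i j
    have := congrFun (congrFun hsym i) j
    simp only [transpose_apply] at this
    simp [M, Matrix.map_apply, this]
  have hMdiag : ∀ i, M i i = 0 := by
    intro i
    obtain ⟨b, hb⟩ := hdiag i
    show φ (A i i) = 0
    rw [hb, _root_.map_mul φ, show φ (2:R) = 2 from map_ofNat φ 2, h2, zero_mul]
  -- term of a permutation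
  set f : Equiv.Perm (Fin n) → R ⧸ I :=
    fun σ => Equiv.Perm.sign σ • ∏ i, M (σ i) i
  have hf : ∀ σ, f σ⁻¹ = f σ := by
    intro σ
    have hprod : ∏ i, M (σ⁻¹ i) i = ∏ i, M (σ i) i := by
      rw [← Equiv.prod_comp σ fun i => M (σ⁻¹ i) i]
      simp only [Equiv.Perm.inv_def, Equiv.symm_apply_apply]
      exact Finset.prod_congr rfl fun i _ => hMsym i (σ i)
    simp only [f, Equiv.Perm.sign_inv, hprod]
  rw [Matrix.det_apply]
  refine Finset.sum_involution (fun σ _ => σ⁻¹) ?_ ?_ (fun σ _ => Finset.mem_univ _)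
    (fun σ _ => inv_inv σ)
  · intro σ _
    show f σ + f σ⁻¹ = 0
    rw [hf, ← two_smul (R ⧸ I) (f σ), h2, zero_smul]
  · intro σ _ hσ hinv
    apply hσ
    -- σ is an involution, so it has a fixed point since n is odd
    have hσ2 : σ ^ 2 ^ 1 = 1 := by
      have h : σ⁻¹ = σ := hinv
      rw [pow_one, sq]
      nth_rewrite 1 [← h]
      exact inv_mul_cancel σ
    have hcard : ¬(2 ∣ Fintype.card (Fin n)) := by
      simpa [Fintype.card_fin, Nat.two_dvd_ne_zero, Nat.odd_iff] using hn
    have : Fact (Nat.Prime 2) := ⟨Nat.prime_two⟩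
    obtain ⟨i, hi⟩ := Equiv.Perm.exists_fixed_point_of_prime hcard hσ2
    show f σ = 0
    have : M (σ i) i = 0 := by rw [hi]; exact hMdiag i
    have h0 : ∏ j, M (σ j) j = 0 :=
      Finset.prod_eq_zero (f := fun j => M (σ j) j) (Finset.mem_univ i) this
    simp only [f]
    rw [h0, smul_zero]
end

section
/- Let n be an odd positive natural number. Then the ideal of ℤ generated by the set of determinants of all symmetric n×n integer matrices with even diagonal equals the ideal 2ℤ: every such determinant is divisible by 2, and there exists such a matrix whose determinant is ±2. -/
open Matrix

private lemma exists_fixed_of_selfinv {n : ℕ} (hodd : Odd n) (σ : Equiv.Perm (Fin n))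
    (hσ : σ⁻¹ = σ) : ∃ i, σ i = i := by
  by_contra h
  push_neg at h
  have hsum : ∑ _i : Fin n, (1 : ZMod 2) = 0 := by
    refine Finset.sum_involution (fun i _ => σ i) (fun a _ => by decide)
      (fun a _ _ => h a) (fun a _ => Finset.mem_univ _) (fun a _ => ?_)
    show σ (σ a) = a
    exact (show σ (σ a) = σ⁻¹ (σ a) by rw [hσ]).trans (Equiv.symm_apply_apply σ a)
  simp only [Finset.sum_const, Finset.card_univ, Fintype.card_fin, nsmul_eq_mul, mul_one] at hsum
  have h2 : (2 : ℕ) ∣ n := (ZMod.natCast_eq_zero_iff n 2).mp hsum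
  have := Nat.odd_iff.mp hodd
  omega

private lemma det_even_of_symm {n : ℕ} (hodd : Odd n) (A : Matrix (Fin n) (Fin n) ℤ)
    (hsymm : Aᵀ = A) (hdiag : ∀ i, ∃ b : ℤ, A i i = 2 * b) : (2 : ℤ) ∣ A.det := by
  set f : ℤ →+* ZMod 2 := Int.castRingHom (ZMod 2) with hf
  set B : Matrix (Fin n) (Fin n) (ZMod 2) := f.mapMatrix A with hB
  have hBsymm : ∀ i j, B i j = B j i := by
    intro i j
    have h1 : Aᵀ i j = A i j := by rw [hsymm]
    rw [Matrix.transpose_apply] at h1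
    simpa [hB, RingHom.mapMatrix_apply, Matrix.map_apply] using congrArg f h1.symm
  have hBdiag : ∀ i, B i i = 0 := by
    intro i
    obtain ⟨b, hb⟩ := hdiag i
    have h0 : f (A i i) = 0 := by
      rw [hb, map_mul f 2 b, show f 2 = 0 by decide, zero_mul]
    simpa [hB, RingHom.mapMatrix_apply, Matrix.map_apply] using h0
  have hdet0 : B.det = 0 := by
    rw [Matrix.det_apply]
    refine Finset.sum_involution (fun σ _ => σ⁻¹) (fun σ _ => ?_)
      (fun σ _ hne heq => ?_) (fun σ _ => Finset.mem_univ _) (fun σ _ => inv_inv σ)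
    · have hprod : ∏ i, B (σ⁻¹ i) i = ∏ i, B (σ i) i := by
        calc ∏ i, B (σ⁻¹ i) i = ∏ i, B i (σ⁻¹ i) :=
              Finset.prod_congr rfl fun i _ => hBsymm _ _
          _ = ∏ i, B (σ i) (σ⁻¹ (σ i)) := (Equiv.prod_comp σ fun j => B j (σ⁻¹ j)).symm
          _ = ∏ i, B (σ i) i := by simp
      have heq2 : Equiv.Perm.sign σ⁻¹ • ∏ i, B (σ⁻¹ i) i
          = Equiv.Perm.sign σ • ∏ i, B (σ i) i := by
        rw [hprod, Equiv.Perm.sign_inv]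
      rw [heq2]
      have hx : ∀ x : ZMod 2, x + x = 0 := by decide
      exact hx _
    · obtain ⟨j, hj⟩ := exists_fixed_of_selfinv hodd σ heq
      apply hne
      have hz : ∏ i, B (σ i) i = 0 :=
        Finset.prod_eq_zero (Finset.mem_univ j) (by rw [hj]; exact hBdiag j)
      rw [hz, smul_zero]
  have hfd : f A.det = 0 := by rw [RingHom.map_det]; exact hdet0
  exact (ZMod.intCast_zmod_eq_zero_iff_dvd A.det 2).mp hfd

/-- For `n` odd (and positive), the ideal of `ℤ` generated by the
determinants of all symmetric `n × n` integer matrices with even diagonal equals `2ℤ`: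
every such determinant is divisible by `2`, and some such matrix has determinant `±2`. -/
theorem spanDetSymmEvenDiag_eq_two_of_odd (n : ℕ) (hpos : 0 < n) (hodd : Odd n) :
    Ideal.span {d : ℤ | ∃ A : Matrix (Fin n) (Fin n) ℤ,
        Aᵀ = A ∧ (∀ i, ∃ b : ℤ, A i i = 2 * b) ∧ A.det = d} = Ideal.span {2} ∧
    (∀ A : Matrix (Fin n) (Fin n) ℤ, Aᵀ = A → (∀ i, ∃ b : ℤ, A i i = 2 * b) →
      (2 : ℤ) ∣ A.det) ∧
    ∃ A : Matrix (Fin n) (Fin n) ℤ,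
      Aᵀ = A ∧ (∀ i, ∃ b : ℤ, A i i = 2 * b) ∧ (A.det = 2 ∨ A.det = -2) := by
  have hn2 : n % 2 = 1 := Nat.odd_iff.mp hodd
  -- construct the example matrix
  let g : Fin n → Fin n := fun i =>
    if h : (i : ℕ) = n - 1 then i
    else if hp : (i : ℕ) % 2 = 0 then ⟨(i : ℕ) + 1, by have := i.isLt; omega⟩
    else ⟨(i : ℕ) - 1, by have := i.isLt; omega⟩
  have hginv : Function.Involutive g := by
    intro i
    by_cases h : (i : ℕ) = n - 1
    · simp [g, h]
    · by_cases hp : (i : ℕ) % 2 = 0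
      · have hne : (i : ℕ) + 1 ≠ n - 1 := by have := i.isLt; omega
        have hp2 : ¬ ((i : ℕ) + 1) % 2 = 0 := by omega
        simp only [g, dif_neg h, dif_pos hp, dif_neg hne, dif_neg hp2]
        exact Fin.ext (by simp)
      · have hne : (i : ℕ) - 1 ≠ n - 1 := by have := i.isLt; omega
        have hp2 : ((i : ℕ) - 1) % 2 = 0 := by omega
        simp only [g, dif_neg h, dif_neg hp, dif_neg hne, dif_pos hp2]
        exact Fin.ext (by simp; omega)
  let τ : Equiv.Perm (Fin n) := hginv.toPerm
  have hττ : ∀ i, τ (τ i) = i := fun i => hginv i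
  have hswap : ∀ i j, τ i = j → τ j = i := fun i j h => by rw [← h]; exact hττ i
  let last : Fin n := ⟨n - 1, by omega⟩
  have hτlast : τ last = last := by
    show g last = last
    simp [g, last]
  have hτfix : ∀ i : Fin n, τ i = i → i = last := by
    intro i h
    by_contra hne
    have hne' : (i : ℕ) ≠ n - 1 := fun hh => hne (Fin.ext hh)
    have hv := congrArg Fin.val h
    rw [show τ i = g i from rfl] at hv
    by_cases hp : (i : ℕ) % 2 = 0
    · simp only [g, dif_neg hne', dif_pos hp] at hv
      have hv' : (i : ℕ) + 1 = (i : ℕ) := hv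
      omega
    · simp only [g, dif_neg hne', dif_neg hp] at hv
      have hv' : (i : ℕ) - 1 = (i : ℕ) := hv
      omega
  let d : Fin n → ℤ := fun j => if j = last then 2 else 1
  let A : Matrix (Fin n) (Fin n) ℤ := (τ.permMatrix ℤ) * Matrix.diagonal d
  have hAapply : ∀ i j, A i j = (if τ i = j then 1 else 0) * d j := by
    intro i j
    rw [show A i j = (τ.permMatrix ℤ) i j * d j from Matrix.mul_diagonal _ _ _ _]
    congr 1
    simp [Equiv.Perm.permMatrix, PEquiv.toMatrix_apply, Equiv.toPEquiv, Option.mem_def]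
  have hdlast : ∀ i j, τ i = j → d i = d j := by
    intro i j h
    by_cases hi : i = last
    · rw [hi] at h; rw [hτlast] at h; rw [hi, ← h]
    · have hj : j ≠ last := by
        intro hj
        rw [hj] at h
        exact hi (τ.injective (h.trans hτlast.symm))
      simp [d, hi, hj]
  have hsymm : Aᵀ = A := by
    ext i j
    rw [Matrix.transpose_apply, hAapply, hAapply]
    by_cases h : τ i = j
    · have h' : τ j = i := hswap i j h
      rw [if_pos h, if_pos h', one_mul, one_mul]
      exact hdlast i j h
    · have h' : τ j ≠ i := fun hh => h (hswap j i hh)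
      rw [if_neg h, if_neg h', zero_mul, zero_mul]
  have hdiag : ∀ i, ∃ b : ℤ, A i i = 2 * b := by
    intro i
    rw [hAapply]
    by_cases h : τ i = i
    · have hi : i = last := hτfix i h
      exact ⟨1, by rw [if_pos h, one_mul, hi]; simp [d]⟩
    · exact ⟨0, by rw [if_neg h, zero_mul, mul_zero]⟩
  have hdet : A.det = (Equiv.Perm.sign τ : ℤ) * 2 := by
    have hprod : ∏ j, d j = 2 := by
      show (∏ j, if j = last then (2:ℤ) else 1) = 2
      rw [Finset.prod_ite_eq' Finset.univ last (fun _ => (2:ℤ))]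
      simp
    rw [Matrix.det_mul, Matrix.det_permutation, Matrix.det_diagonal, hprod]
    simp
  have hdet2 : A.det = 2 ∨ A.det = -2 := by
    rcases Int.units_eq_one_or (Equiv.Perm.sign τ) with hs | hs <;> rw [hdet, hs] <;> simp
  refine ⟨?_, fun M hM1 hM2 => det_even_of_symm hodd M hM1 hM2,
    ⟨A, hsymm, hdiag, hdet2⟩⟩
  apply le_antisymm
  · rw [Ideal.span_le]
    rintro x ⟨M, hM1, hM2, rfl⟩
    rw [SetLike.mem_coe, Ideal.mem_span_singleton]
    exact det_even_of_symm hodd M hM1 hM2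
  · rw [Ideal.span_le, Set.singleton_subset_iff, SetLike.mem_coe]
    have hAmem : A.det ∈ Ideal.span {d : ℤ | ∃ A : Matrix (Fin n) (Fin n) ℤ,
        Aᵀ = A ∧ (∀ i, ∃ b : ℤ, A i i = 2 * b) ∧ A.det = d} :=
      Ideal.subset_span ⟨A, hsymm, hdiag, rfl⟩
    rcases hdet2 with h | h
    · rw [h] at hAmem; exact hAmem
    · rw [h] at hAmem
      have := neg_mem hAmem
      simpa using this
end

section
/- Let A and M be commutative groups (written multiplicatively) and let h : A → A → M be symmetric (h a b = h b a for all a, b) and multiplicative in each variable (h a (b·c) = (h a b)·(h a c) for all a, b, c). Then for every n ∈ ℕ, every u ∈ A, and every a : Fin n → A, one has ∏_{i<j} h (u·a i) (u·a j) = (h u u)^{n(n−1)/2} · ( h u (∏_i a i) )^{n−1} · ∏_{i<j} h (a i) (a j). -/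
open Finset

private lemma swap_bij {n : ℕ} :
    (univ.filter (fun p : Fin n × Fin n => p.1 < p.2)) =
      (univ.filter (fun p : Fin n × Fin n => p.2 < p.1)).image Prod.swap := by
  ext ⟨i, j⟩
  simp only [Finset.mem_image, Finset.mem_filter, Finset.mem_univ, true_and, Prod.exists,
    Prod.swap_prod_mk, Prod.mk.injEq]
  constructor
  · intro hij; exact ⟨j, i, hij, rfl, rfl⟩
  · rintro ⟨x, y, hxy, rfl, rfl⟩; exact hxy

private lemma union_offDiag {n : ℕ} :
    (univ.filter (fun p : Fin n × Fin n => p.1 < p.2)) ∪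
      (univ.filter (fun p : Fin n × Fin n => p.2 < p.1)) = (univ : Finset (Fin n)).offDiag := by
  ext ⟨i, j⟩
  simp only [Finset.mem_union, Finset.mem_filter, Finset.mem_univ, true_and,
    Finset.mem_offDiag, ne_eq]
  exact lt_or_lt_iff_ne

private lemma disj {n : ℕ} :
    Disjoint (univ.filter (fun p : Fin n × Fin n => p.1 < p.2))
      (univ.filter (fun p : Fin n × Fin n => p.2 < p.1)) := by
  rw [Finset.disjoint_left]
  rintro ⟨i, j⟩ hi hj
  simp at hi hj
  omega

private lemma card_lt {n : ℕ} :
    (univ.filter (fun p : Fin n × Fin n => p.1 < p.2)).card = n * (n - 1) / 2 := by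
  have h1 : (univ.filter (fun p : Fin n × Fin n => p.1 < p.2)).card
      = (univ.filter (fun p : Fin n × Fin n => p.2 < p.1)).card := by
    rw [swap_bij]
    rw [Finset.card_image_of_injective _ Prod.swap_injective]
  have h2 := congrArg Finset.card (union_offDiag (n := n))
  rw [Finset.card_union_of_disjoint disj, Finset.offDiag_card] at h2
  simp only [Finset.card_univ, Fintype.card_fin] at h2
  obtain ⟨k, hk⟩ := Nat.even_mul_pred_self n
  have hnn : n * n - n = n * (n - 1) := by
    cases n with
    | zero => rfl
    | succ m => simp [Nat.succ_mul, Nat.mul_succ]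
  omega

private lemma prod_offDiag {n : ℕ} {M : Type*} [CommGroup M] (f : Fin n → M) :
    ∏ p ∈ (univ : Finset (Fin n)).offDiag, f p.1 = (∏ i, f i) ^ (n - 1) := by
  rw [show (univ : Finset (Fin n)).offDiag = (univ ×ˢ univ).filter (fun a : Fin n × Fin n => a.1 ≠ a.2) by ext; simp, Finset.prod_filter, Finset.prod_product]
  have key : ∀ i : Fin n, (∏ j : Fin n, if (i, j).1 ≠ (i, j).2 then f (i, j).1 else 1)
      = f i ^ (n - 1) := by
    intro i
    have : (∏ j : Fin n, if (i, j).1 ≠ (i, j).2 then f (i, j).1 else 1)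
        = ∏ j ∈ univ.filter (fun j : Fin n => i ≠ j), f i := by
      rw [Finset.prod_filter]
    rw [this, Finset.prod_const]
    congr 1
    have : univ.filter (fun j : Fin n => i ≠ j) = univ.erase i := by
      ext j; simp [ne_comm, eq_comm]
    rw [this, Finset.card_erase_of_mem (Finset.mem_univ i)]
    simp
  simp_rw [key]
  rw [Finset.prod_pow]

private lemma prod_pairs_mul {n : ℕ} {M : Type*} [CommGroup M] (f : Fin n → M) :
    (∏ p ∈ univ.filter (fun p : Fin n × Fin n => p.1 < p.2), (f p.1 * f p.2))
      = (∏ i, f i) ^ (n - 1) := by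
  rw [Finset.prod_mul_distrib]
  have h2 : (∏ p ∈ univ.filter (fun p : Fin n × Fin n => p.1 < p.2), f p.2)
      = ∏ p ∈ univ.filter (fun p : Fin n × Fin n => p.2 < p.1), f p.1 := by
    rw [swap_bij, Finset.prod_image (fun x _ y _ => fun hh => Prod.swap_injective hh)]
    rfl
  rw [h2, ← Finset.prod_union disj, union_offDiag, prod_offDiag]

/-- (Lemma 5.6, scaling a symmetric bimultiplicative pairing.)
If `h : A → A → M` is symmetric and multiplicative in each variable, then for all `n`,
`u` and `a : Fin n → A`,
`∏_{i<j} h (u * a i) (u * a j)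
  = (h u u) ^ (n(n-1)/2) * (h u (∏ i, a i)) ^ (n-1) * ∏_{i<j} h (a i) (a j)`. -/
theorem prod_pairs_scaled_pairing {A M : Type*} [CommGroup A] [CommGroup M]
    (h : A → A → M) (hsymm : ∀ a b, h a b = h b a)
    (hmul : ∀ a b c, h a (b * c) = h a b * h a c)
    (n : ℕ) (u : A) (a : Fin n → A) :
    (∏ p ∈ Finset.univ.filter (fun p : Fin n × Fin n => p.1 < p.2),
        h (u * a p.1) (u * a p.2))
      = (h u u) ^ (n * (n - 1) / 2) * (h u (∏ i, a i)) ^ (n - 1) *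
        ∏ p ∈ Finset.univ.filter (fun p : Fin n × Fin n => p.1 < p.2),
          h (a p.1) (a p.2) := by
  have hmul' : ∀ a b c : A, h (a * b) c = h a c * h b c := by
    intro x y z
    rw [hsymm, hmul, hsymm z x, hsymm z y]
  have expand : ∀ x y : A, h (u * x) (u * y) = h u u * (h u x * h u y) * h x y := by
    intro x y
    rw [hmul, hmul', hmul']
    rw [hsymm x u]
    simp only [mul_assoc]
  simp_rw [expand]
  rw [Finset.prod_mul_distrib, Finset.prod_mul_distrib, Finset.prod_const, card_lt]
  congr 1
  congr 1
  rw [prod_pairs_mul (fun i => h u (a i))]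
  congr 1
  exact (map_prod (MonoidHom.mk' (h u) (hmul u)) a univ).symm
end

section
/- Let F be a field of characteristic ≠ 2 and K a field extension of F with finrank F K = 2, and let σ be the unique nontrivial F-algebra automorphism of K. If γ : K → K is an F-linear map satisfying Norm_{K/F}(γ x) = Norm_{K/F}(x) for all x ∈ K, then there exists α ∈ K with Norm_{K/F}(α) = 1 such that either γ x = α·x for all x ∈ K, or γ x = α·σ(x) for all x ∈ K. -/
open Polynomial in
lemma mcharpoly {R : Type*} [CommRing R] (M : Matrix (Fin 2) (Fin 2) R) :
    M.charpoly = X ^ 2 - C M.trace * X + C M.det := by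
  rw [Matrix.charpoly, Matrix.det_fin_two, Matrix.trace_fin_two, Matrix.det_fin_two]
  simp [Matrix.charmatrix_apply]
  ring

open Polynomial in
lemma keyid {F K : Type*} [Field F] [Field K] [Algebra F K]
    (hrank : Module.finrank F K = 2) (x : K) :
    x ^ 2 - algebraMap F K (Algebra.trace F K x) * x + algebraMap F K (Algebra.norm F x) = 0 := by
  have : Module.Finite F K := Module.finite_of_finrank_eq_succ hrank
  let b : Module.Basis (Fin 2) F K := Module.finBasisOfFinrankEq F K hrank
  let f : K →ₗ[F] K := LinearMap.mulLeft F x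
  have hc : f.charpoly = X ^ 2 - C (Algebra.trace F K x) * X + C (Algebra.norm F x) := by
    rw [← LinearMap.charpoly_toMatrix f b, mcharpoly]
    congr 1
    · congr 2
      · rw [Algebra.trace_eq_matrix_trace b]
        congr 1
    · rw [Algebra.norm_eq_matrix_det b]
      congr 1
  have h0 := LinearMap.aeval_self_charpoly f
  rw [hc] at h0
  simp only [map_add, map_sub, map_pow, map_mul, aeval_X, aeval_C] at h0
  have := LinearMap.congr_fun h0 1
  simp only [pow_two, LinearMap.add_apply, LinearMap.sub_apply, Module.End.mul_apply,
    Module.algebraMap_end_apply, LinearMap.mulLeft_apply, LinearMap.zero_apply, mul_one] at this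
  rw [Algebra.smul_def, Algebra.smul_def, mul_one] at this
  simp only [f, LinearMap.mulLeft_apply, mul_one] at this
  linear_combination this

/-- (Lemma 8.3, classification of isometries of the norm form.)
Let `K/F` be a quadratic extension of fields of characteristic `≠ 2` and `σ` the
nontrivial `F`-algebra automorphism of `K`.  Any `F`-linear map `γ : K → K` preserving
the norm form `Norm_{K/F}` is either multiplication by a norm-one element `α`, or such a
multiplication composed with `σ`. -/
theorem norm_isometry_eq_mul_or_mul_conj {F K : Type*} [Field F] [Field K] [Algebra F K]
    (hchar : (2 : F) ≠ 0) (hrank : Module.finrank F K = 2)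
    (σ : K ≃ₐ[F] K) (hσ : σ ≠ AlgEquiv.refl)
    (γ : K →ₗ[F] K) (hγ : ∀ x : K, Algebra.norm F (γ x) = Algebra.norm F x) :
    ∃ α : K, Algebra.norm F α = 1 ∧
      ((∀ x : K, γ x = α * x) ∨ (∀ x : K, γ x = α * σ x)) := by
  set e := algebraMap F K with he
  -- dichotomy for σ
  have hdich : ∀ x : K, σ x = x ∨ σ x = e (Algebra.trace F K x) - x := by
    intro x
    have k1 := keyid hrank x
    have k2 : (σ x) ^ 2 - e (Algebra.trace F K x) * σ x + e (Algebra.norm F x) = 0 := by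
      have h := congrArg σ k1
      simpa using h
    have hfac : (σ x - x) * (σ x - (e (Algebra.trace F K x) - x)) = 0 := by
      linear_combination k2 - k1
    rcases mul_eq_zero.mp hfac with h | h
    · exact Or.inl (sub_eq_zero.mp h)
    · exact Or.inr (sub_eq_zero.mp h)
  -- σ x = tr x - x for all x
  have hσf : ∀ x : K, σ x = e (Algebra.trace F K x) - x := by
    by_contra hb'
    push_neg at hb'
    obtain ⟨b, hb⟩ := hb'
    have hσb : σ b = b := (hdich b).resolve_right hb
    have ha' : ¬ ∀ x : K, σ x = x := fun h => hσ (AlgEquiv.ext h)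
    push_neg at ha'
    obtain ⟨a, ha⟩ := ha'
    have ha2 : σ a = e (Algebra.trace F K a) - a := (hdich a).resolve_left ha
    have hsum : σ (a + b) = e (Algebra.trace F K a) - a + b := by
      rw [map_add, ha2, hσb]
    have htr : (Algebra.trace F K) (a + b) = Algebra.trace F K a + Algebra.trace F K b :=
      map_add _ a b
    rcases hdich (a + b) with h | h
    · rw [hsum] at h
      have : σ a = a := by rw [ha2]; linear_combination h
      exact ha this
    · rw [hsum, htr, map_add] at h
      have : σ b = e (Algebra.trace F K b) - b := by rw [hσb]; linear_combination h
      exact hb this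
  -- norm as product with conjugate
  have hn : ∀ y : K, e (Algebra.norm F y) = y * σ y := by
    intro y
    have k1 := keyid hrank y
    have h2 := hσf y
    linear_combination k1 - y * h2
  set α : K := γ 1 with hαdef
  have hα1 : Algebra.norm F α = 1 := by simpa using hγ 1
  have hαn : α * σ α = 1 := by
    rw [← hn α, hα1, map_one]
  have hα0 : α ≠ 0 := left_ne_zero_of_mul_eq_one hαn
  have hγ' : ∀ x : K, γ x * σ (γ x) = x * σ x := by
    intro x
    have h := congrArg e (hγ x)
    rwa [hn, hn] at h
  -- polarization
  have hstar : ∀ x : K, γ x * σ α + α * σ (γ x) = x + σ x := by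
    intro x
    have h1 := hγ' (x + 1)
    have h2 : γ (x + 1) = γ x + α := by rw [map_add, hαdef]
    rw [h2, map_add, map_add, map_one] at h1
    linear_combination h1 - hγ' x - hαn
  -- the quadratic dichotomy for γ
  have hq : ∀ x : K, γ x = α * x ∨ γ x = α * σ x := by
    intro x
    have h3 := hstar x
    have h4 := hγ' x
    have hfac : (γ x - α * x) * (γ x - α * σ x) = 0 := by
      linear_combination (α * γ x) * h3 - α ^ 2 * h4 - (γ x) ^ 2 * hαn
    rcases mul_eq_zero.mp hfac with h | h
    · exact Or.inl (sub_eq_zero.mp h)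
    · exact Or.inr (sub_eq_zero.mp h)
  refine ⟨α, hα1, ?_⟩
  by_cases hL : ∀ x : K, γ x = α * x
  · exact Or.inl hL
  push_neg at hL
  obtain ⟨a, ha⟩ := hL
  have haσ : γ a = α * σ a := (hq a).resolve_left ha
  have hane : σ a ≠ a := by
    intro h
    exact ha (by rw [haσ, h])
  refine Or.inr fun x => ?_
  rcases hq x with h | h
  · -- γ x = α * x; show σ x = x
    rcases hq (a + x) with h2 | h2
    · rw [map_add, haσ, h, mul_add] at h2
      have : σ a = a := by
        field_simp at h2
        exact add_right_cancel h2
      exact absurd this hane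
    · rw [map_add, haσ, h, map_add, mul_add] at h2
      have hx : x = σ x := by
        have := add_left_cancel h2
        exact mul_left_cancel₀ hα0 this
      rw [h, ← hx]
  · exact h
end

section
/- Let K/F be a CM extension of number fields, and let u ∈ (𝓞_K)ˣ be a unit such that Norm_{K/F}(u) = v² for some unit v ∈ (𝓞_F)ˣ. Then u can be written as u = w·ζ where w ∈ (𝓞_F)ˣ (viewed as a unit of 𝓞_K) and ζ ∈ (𝓞_K)ˣ has finite order (is a root of unity). -/
open NumberField

lemma apply_norm_eq_mul_conj {F K : Type*} [Field F] [NumberField F]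
    [Field K] [NumberField K] [Algebra F K] (hrank : Module.finrank F K = 2)
    (htrF : ∀ φ : F →+* ℂ, ComplexEmbedding.IsReal φ)
    (htcK : ∀ ψ : K →+* ℂ, ¬ ComplexEmbedding.IsReal ψ)
    (ψ : K →+* ℂ) (x : K) :
    (ψ.comp (algebraMap F K)) (Algebra.norm F x)
      = ψ x * (starRingEnd ℂ) (ψ x) := by
  classical
  letI : Algebra F ℂ := (ψ.comp (algebraMap F K)).toAlgebra
  have hcomm : ∀ a : F, (starRingEnd ℂ) (ψ (algebraMap F K a)) = ψ (algebraMap F K a) := by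
    intro a
    have := htrF (ψ.comp (algebraMap F K))
    rw [ComplexEmbedding.isReal_iff] at this
    exact congrFun (congrArg (fun f : F →+* ℂ => (f : F → ℂ)) this) a
  let ψ' : K →ₐ[F] ℂ := { toRingHom := ψ, commutes' := fun _ => rfl }
  let ψcr : K →+* ℂ := RingHom.comp (starRingEnd ℂ) ψ
  let ψc : K →ₐ[F] ℂ := { toRingHom := ψcr, commutes' := fun a => hcomm a }
  have hne : ψ' ≠ ψc := by
    intro h
    apply htcK ψ
    rw [ComplexEmbedding.isReal_iff]
    ext y
    have := congrArg (fun f : K →ₐ[F] ℂ => f y) h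
    simpa [ψ', ψc, ψcr, ComplexEmbedding.conjugate_coe_eq] using this.symm
  have hcard : Fintype.card (K →ₐ[F] ℂ) = 2 := by
    rw [AlgHom.card, hrank]
  have huniv : (Finset.univ : Finset (K →ₐ[F] ℂ)) = {ψ', ψc} := by
    symm
    apply Finset.eq_univ_of_card
    rw [Finset.card_pair hne, hcard]
  have h := Algebra.norm_eq_prod_embeddings F ℂ x
  rw [huniv, Finset.prod_pair hne] at h
  exact h


/-- For a CM extension `K/F` of number fields, any unit `u` of `𝓞 K`
whose relative norm is the square of a unit of `𝓞 F` factors as `u = w * ζ` with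
`w` a unit of `𝓞 F` and `ζ` a root of unity of `K`. -/
theorem unit_eq_baseUnit_mul_rootOfUnity_of_norm_sq {F K : Type*} [Field F] [NumberField F]
    [Field K] [NumberField K] [Algebra F K] (hrank : Module.finrank F K = 2)
    (htrF : ∀ φ : F →+* ℂ, ComplexEmbedding.IsReal φ)
    (htcK : ∀ ψ : K →+* ℂ, ¬ ComplexEmbedding.IsReal ψ)
    (u : (𝓞 K)ˣ) (v : (𝓞 F)ˣ)
    (hu : Algebra.norm F ((u : 𝓞 K) : K) = (((v : 𝓞 F) : F)) ^ 2) :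
    ∃ (w : (𝓞 F)ˣ) (ζ : (𝓞 K)ˣ), IsOfFinOrder ζ ∧
      ((u : 𝓞 K) : K) = algebraMap F K ((w : 𝓞 F) : F) * ((ζ : 𝓞 K) : K) := by
  classical
  let vK : (𝓞 K)ˣ := Units.map (algebraMap (𝓞 F) (𝓞 K)).toMonoidHom v
  refine ⟨v, vK⁻¹ * u, ?_, ?_⟩
  · -- root of unity
    have hvK : ((vK : 𝓞 K) : K) = algebraMap F K ((v : 𝓞 F) : F) := by
      simp [vK]
      rfl
    have hnormv : Algebra.norm F ((vK : 𝓞 K) : K) = ((v : 𝓞 F) : F) ^ 2 := by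
      rw [hvK, Algebra.norm_algebraMap, hrank]
    have hv2 : (((v : 𝓞 F) : F)) ^ 2 ≠ 0 := by
      apply pow_ne_zero
      simpa using v.ne_zero
    have hnorm1 : Algebra.norm F (((vK⁻¹ * u : (𝓞 K)ˣ) : 𝓞 K) : K) = 1 := by
      have h1 : Algebra.norm F ((((vK⁻¹ : (𝓞 K)ˣ) : 𝓞 K) : K))
          * Algebra.norm F ((vK : 𝓞 K) : K) = 1 := by
        rw [← map_mul]
        have : (((vK⁻¹ : (𝓞 K)ˣ) : 𝓞 K) : K) * ((vK : 𝓞 K) : K) = 1 := by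
          rw [← map_mul]; norm_cast
          rw [inv_mul_cancel]; rfl
        rw [this, map_one]
      have : (((vK⁻¹ * u : (𝓞 K)ˣ) : 𝓞 K) : K)
          = (((vK⁻¹ : (𝓞 K)ˣ) : 𝓞 K) : K) * ((u : 𝓞 K) : K) := by push_cast; ring
      rw [this, map_mul, hu]
      rw [hnormv] at h1
      field_simp at h1 ⊢
      linear_combination h1
    set z : K := (((vK⁻¹ * u : (𝓞 K)ˣ) : 𝓞 K) : K) with hz
    have habs : ∀ ψ : K →+* ℂ, ‖ψ z‖ = 1 := by
      intro ψ
      have := apply_norm_eq_mul_conj hrank htrF htcK ψ z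
      rw [hnorm1, map_one, Complex.mul_conj] at this
      have h2 : (Complex.normSq (ψ z) : ℂ) = 1 := this.symm
      rw [Complex.normSq_eq_norm_sq] at h2
      have : ‖ψ z‖ ^ 2 = 1 := by exact_mod_cast h2
      nlinarith [norm_nonneg (ψ z)]
    obtain ⟨n, hn, hpow⟩ := NumberField.Embeddings.pow_eq_one_of_norm_eq_one K ℂ
      (((vK⁻¹ * u : (𝓞 K)ˣ) : 𝓞 K)).isIntegral_coe habs
    rw [isOfFinOrder_iff_pow_eq_one]
    refine ⟨n, hn, ?_⟩
    ext
    push_cast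
    exact_mod_cast hpow
  · -- factorization
    have hvK : ((vK : 𝓞 K) : K) = algebraMap F K ((v : 𝓞 F) : F) := by
      simp [vK]; rfl
    rw [← hvK]
    push_cast
    rw [← mul_assoc]
    norm_cast
    rw [mul_inv_cancel, one_mul]
end

section
/- Let K/F be a CM extension of number fields. Then the relative norm Norm_{K/F} induces a group isomorphism between (𝓞_K)ˣ / ((𝓞_F)ˣ · μ_K) and Norm_{K/F}((𝓞_K)ˣ) / ((𝓞_F)ˣ)², where μ_K denotes the (finite) subgroup of elements of finite order in (𝓞_K)ˣ, (𝓞_F)ˣ is regarded as a subgroup of (𝓞_K)ˣ, and ((𝓞_F)ˣ)² = {v² : v ∈ (𝓞_F)ˣ} = Norm_{K/F}((𝓞_F)ˣ). -/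
open NumberField

section auxCM

open Module

variable {F K : Type*} [Field F] [NumberField F] [Field K] [NumberField K] [Algebra F K]
  [FiniteDimensional F K]

lemma key_norm_embed (hrank : Module.finrank F K = 2)
    (htrF : ∀ φ : F →+* ℂ, ComplexEmbedding.IsReal φ)
    (htcK : ∀ ψ : K →+* ℂ, ¬ ComplexEmbedding.IsReal ψ)
    (ψ : K →+* ℂ) (x : K) :
    ψ (algebraMap F K (Algebra.norm F x)) = ψ x * (starRingEnd ℂ) (ψ x) := by
  classical
  letI : Algebra F ℂ := (ψ.comp (algebraMap F K)).toAlgebra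
  have hφ : ComplexEmbedding.IsReal (ψ.comp (algebraMap F K)) := htrF _
  have hφ' := NumberField.ComplexEmbedding.isReal_iff.mp hφ
  let ψ₁ : K →ₐ[F] ℂ := { ψ with commutes' := fun a => rfl }
  let ψ₂ : K →ₐ[F] ℂ :=
    { ((starRingEnd ℂ).comp ψ) with
      commutes' := fun a => RingHom.congr_fun hφ' a }
  have hne : ψ₁ ≠ ψ₂ := by
    intro h
    apply htcK ψ
    rw [NumberField.ComplexEmbedding.isReal_iff]
    ext y
    exact (AlgHom.congr_fun h y).symm
  have hcard : Fintype.card (K →ₐ[F] ℂ) = 2 := by rw [AlgHom.card]; exact hrank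
  have huniv : (Finset.univ : Finset (K →ₐ[F] ℂ)) = {ψ₁, ψ₂} := by
    symm
    apply Finset.eq_univ_of_card
    rw [hcard, Finset.card_insert_of_notMem (by simpa using hne), Finset.card_singleton]
  have := Algebra.norm_eq_prod_embeddings F ℂ x
  rw [huniv, Finset.prod_insert (by simpa using hne), Finset.prod_singleton] at this
  exact this

lemma norm_one_iff_torsion (hrank : Module.finrank F K = 2)
    (htrF : ∀ φ : F →+* ℂ, ComplexEmbedding.IsReal φ)
    (htcK : ∀ ψ : K →+* ℂ, ¬ ComplexEmbedding.IsReal ψ)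
    (w : (𝓞 K)ˣ) :
    Units.map (RingOfIntegers.norm F : 𝓞 K →* 𝓞 F) w = 1 ↔
      w ∈ CommGroup.torsion (𝓞 K)ˣ := by
  have htor : w ∈ CommGroup.torsion (𝓞 K)ˣ ↔
      ∀ ψ : K →+* ℂ, ‖ψ ((w : 𝓞 K) : K)‖ = 1 := by
    rw [show CommGroup.torsion (𝓞 K)ˣ = NumberField.Units.torsion K from rfl,
      NumberField.Units.mem_torsion]
    constructor
    · intro h ψ
      simpa [NumberField.InfinitePlace.apply] using h (NumberField.InfinitePlace.mk ψ)
    · intro h v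
      rw [← NumberField.InfinitePlace.mk_embedding v, NumberField.InfinitePlace.apply]
      exact h _
  have hkey : ∀ ψ : K →+* ℂ,
      ψ (algebraMap F K (Algebra.norm F ((w : 𝓞 K) : K)))
        = (Complex.normSq (ψ ((w : 𝓞 K) : K)) : ℂ) := by
    intro ψ
    rw [key_norm_embed hrank htrF htcK ψ, Complex.mul_conj]
  constructor
  · intro h
    have h1 : Algebra.norm F ((w : 𝓞 K) : K) = 1 := by
      have hc := congrArg (fun u : (𝓞 F)ˣ => ((u : 𝓞 F) : F)) h
      simpa [RingOfIntegers.coe_norm] using hc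
    rw [htor]
    intro ψ
    have := hkey ψ
    rw [h1, map_one, map_one] at this
    have h2 : Complex.normSq (ψ ((w : 𝓞 K) : K)) = 1 := by
      exact_mod_cast this.symm
    rw [Complex.norm_def, h2, Real.sqrt_one]
  · intro h
    obtain ⟨ψ⟩ : Nonempty (K →+* ℂ) := by
      have := NumberField.Embeddings.card K ℂ
      refine Fintype.card_pos_iff.mp ?_
      rw [this]
      exact finrank_pos
    have habs := (htor.mp h) ψ
    have h2 : Complex.normSq (ψ ((w : 𝓞 K) : K)) = 1 := by
      rw [← Complex.sq_norm, habs, one_pow]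
    have h3 : ψ (algebraMap F K (Algebra.norm F ((w : 𝓞 K) : K))) = ψ (algebraMap F K 1) := by
      rw [hkey ψ, h2, Complex.ofReal_one, map_one, map_one]
    have h4 : Algebra.norm F ((w : 𝓞 K) : K) = 1 :=
      (ψ.comp (algebraMap F K)).injective (by simpa using h3)
    have h5 : ((RingOfIntegers.norm F (w : 𝓞 K) : 𝓞 F) : F) = ((1 : 𝓞 F) : F) := by
      rw [RingOfIntegers.coe_norm, h4]; simp
    rw [Units.ext_iff, Units.coe_map]
    exact NumberField.RingOfIntegers.coe_injective h5

end auxCM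

/-- (Lemma 8.2.)  For a CM extension `K/F` of number fields, the
relative norm induces a group isomorphism
`(𝓞 K)ˣ / ((𝓞 F)ˣ · μ_K) ≃* Norm((𝓞 K)ˣ) / ((𝓞 F)ˣ)²`,
where `μ_K` is the torsion subgroup of `(𝓞 K)ˣ`, `(𝓞 F)ˣ` is viewed inside `(𝓞 K)ˣ`,
and `((𝓞 F)ˣ)²` (the subgroup of squares) coincides with `Norm_{K/F}((𝓞 F)ˣ)`. -/
theorem norm_induces_units_quotient_mulEquiv_of_CM {F K : Type*} [Field F] [NumberField F]
    [Field K] [NumberField K] [Algebra F K] [FiniteDimensional F K]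
    (hrank : Module.finrank F K = 2)
    (htrF : ∀ φ : F →+* ℂ, ComplexEmbedding.IsReal φ)
    (htcK : ∀ ψ : K →+* ℂ, ¬ ComplexEmbedding.IsReal ψ) :
    ((powMonoidHom 2 : (𝓞 F)ˣ →* (𝓞 F)ˣ).range
        = ((Units.map (RingOfIntegers.norm F : 𝓞 K →* 𝓞 F)).comp
            (Units.map (algebraMap (𝓞 F) (𝓞 K)).toMonoidHom)).range) ∧
    ∃ e : ((𝓞 K)ˣ ⧸ ((Units.map (algebraMap (𝓞 F) (𝓞 K)).toMonoidHom).range ⊔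
              CommGroup.torsion (𝓞 K)ˣ)) ≃*
          ((Units.map (RingOfIntegers.norm F : 𝓞 K →* 𝓞 F)).range ⧸
            ((powMonoidHom 2 : (𝓞 F)ˣ →* (𝓞 F)ˣ).range.subgroupOf
              (Units.map (RingOfIntegers.norm F : 𝓞 K →* 𝓞 F)).range)),
      ∀ u : (𝓞 K)ˣ,
        e (QuotientGroup.mk u) =
          QuotientGroup.mk
            ⟨Units.map (RingOfIntegers.norm F : 𝓞 K →* 𝓞 F) u, ⟨u, rfl⟩⟩ := by
  classical
  set N : (𝓞 K)ˣ →* (𝓞 F)ˣ := Units.map (RingOfIntegers.norm F : 𝓞 K →* 𝓞 F) with hNdef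
  set ι : (𝓞 F)ˣ →* (𝓞 K)ˣ := Units.map (algebraMap (𝓞 F) (𝓞 K)).toMonoidHom with hιdef
  have hNι : ∀ v : (𝓞 F)ˣ, N (ι v) = v ^ 2 := by
    intro v
    rw [Units.ext_iff]
    simp only [hNdef, hιdef, Units.coe_map, RingHom.toMonoidHom_eq_coe, MonoidHom.coe_coe,
      Units.val_pow_eq_pow_val]
    rw [RingOfIntegers.norm_algebraMap, hrank]
  have hcomp : (powMonoidHom 2 : (𝓞 F)ˣ →* (𝓞 F)ˣ) = N.comp ι := by
    refine MonoidHom.ext fun v => ?_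
    exact (hNι v).symm
  refine ⟨by rw [hcomp], ?_⟩
  set S := ι.range ⊔ CommGroup.torsion (𝓞 K)ˣ with hSdef
  set Q := ((powMonoidHom 2 : (𝓞 F)ˣ →* (𝓞 F)ˣ).range.subgroupOf N.range)
  let f : (𝓞 K)ˣ →* (N.range ⧸ Q) := (QuotientGroup.mk' Q).comp N.rangeRestrict
  have hfsurj : Function.Surjective f :=
    (QuotientGroup.mk'_surjective Q).comp N.rangeRestrict_surjective
  have hmem : ∀ u : (𝓞 K)ˣ, u ∈ f.ker ↔ ∃ v : (𝓞 F)ˣ, v ^ 2 = N u := by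
    intro u
    rw [MonoidHom.mem_ker]
    show (QuotientGroup.mk (N.rangeRestrict u) : N.range ⧸ Q) = 1 ↔ _
    rw [QuotientGroup.eq_one_iff, Subgroup.mem_subgroupOf]
    constructor
    · rintro ⟨v, hv⟩; exact ⟨v, hv⟩
    · rintro ⟨v, hv⟩; exact ⟨v, hv⟩
  have hker : f.ker = S := by
    ext u
    rw [hmem]
    constructor
    · rintro ⟨v, hv⟩
      have hw : N ((ι v)⁻¹ * u) = 1 := by
        rw [map_mul, map_inv, hNι, hv, inv_mul_cancel]
      have htor : (ι v)⁻¹ * u ∈ CommGroup.torsion (𝓞 K)ˣ :=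
        (norm_one_iff_torsion hrank htrF htcK _).mp hw
      have hu : u = ι v * ((ι v)⁻¹ * u) := (mul_inv_cancel_left _ _).symm
      rw [hu]
      exact Subgroup.mul_mem _ (Subgroup.mem_sup_left ⟨v, rfl⟩) (Subgroup.mem_sup_right htor)
    · intro hu
      obtain ⟨y, ⟨v, rfl⟩, z, hz, rfl⟩ := Subgroup.mem_sup.mp hu
      refine ⟨v, ?_⟩
      rw [map_mul, hNι, (norm_one_iff_torsion hrank htrF htcK z).mpr hz, mul_one]
  refine ⟨(QuotientGroup.quotientMulEquivOfEq hker.symm).trans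
    (QuotientGroup.quotientKerEquivOfSurjective f hfsurj), fun u => ?_⟩
  rfl
end

section
/- Let r ≥ 1 and let x : Fin r → ℂ. For each j with 1 ≤ j ≤ r−1 set P_j := x_j·x_{j+1}⋯x_{r−1}, and assume |P_j| < 1 for every such j. Then the family of complex numbers ∏_{i=0}^{r−1} (x_i)^{f(i)}, indexed by the set of functions f : Fin r → ℕ that are strictly increasing and satisfy f(0) = 0, is summable, and its sum equals ∏_{j=1}^{r−1} P_j/(1 − P_j). -/
open Finset

private lemma aux_tsum_pi : ∀ (n : ℕ) (F : Fin n → ℕ → ℂ),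
    (∀ i, Summable fun k => ‖F i k‖) →
    Summable (fun g : Fin n → ℕ => ‖∏ i, F i (g i)‖) ∧
      ∑' g : Fin n → ℕ, ∏ i, F i (g i) = ∏ i, ∑' k, F i k := by
  intro n
  induction n with
  | zero =>
    intro F _
    constructor
    · exact Summable.of_finite
    · rw [tsum_eq_single (fun i : Fin 0 => (0 : ℕ))
        (fun b hb => absurd (Subsingleton.elim b _) hb)]
      simp
  | succ n ih =>
    intro F hF
    obtain ⟨ihS, ihT⟩ := ih (fun i => F i.succ) (fun i => hF i.succ)
    have h0 : Summable fun k => ‖F 0 k‖ := hF 0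
    set e : ℕ × (Fin n → ℕ) ≃ (Fin (n + 1) → ℕ) := Fin.consEquiv fun _ => ℕ with he
    have key : ∀ p : ℕ × (Fin n → ℕ),
        ∏ i, F i (e p i) = F 0 p.1 * ∏ i : Fin n, F i.succ (p.2 i) := by
      intro p
      rw [Fin.prod_univ_succ]
      simp [he, Fin.consEquiv]
    have hS : Summable fun p : ℕ × (Fin n → ℕ) =>
        ‖F 0 p.1 * ∏ i : Fin n, F i.succ (p.2 i)‖ := by
      have := summable_mul_of_summable_norm (f := fun k => ‖F 0 k‖)
        (g := fun g : Fin n → ℕ => ‖∏ i : Fin n, F i.succ (g i)‖)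
        (by simpa using h0) (by simpa using ihS)
      simpa [norm_mul] using this
    constructor
    · rw [← e.summable_iff]
      exact hS.congr fun p => (congrArg norm (key p)).symm
    · rw [← e.tsum_eq, Fin.prod_univ_succ]
      calc ∑' p : ℕ × (Fin n → ℕ), ∏ i, F i (e p i)
          = ∑' p : ℕ × (Fin n → ℕ), F 0 p.1 * ∏ i : Fin n, F i.succ (p.2 i) := by
            exact tsum_congr key
        _ = (∑' k, F 0 k) * ∑' g : Fin n → ℕ, ∏ i : Fin n, F i.succ (g i) :=
            (tsum_mul_tsum_of_summable_norm h0 ihS).symm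
        _ = (∑' k, F 0 k) * ∏ i : Fin n, ∑' k, F i.succ k := by rw [ihT]

/-- (Geometric-series core of Theorem 5.1.)  Let `r ≥ 1`,
`x : Fin r → ℂ`, and for `1 ≤ j ≤ r - 1` let `P j = x j * x (j+1) * ⋯ * x (r-1)`;
assume `|P j| < 1` for all such `j`.  Then the family
`f ↦ ∏ i, (x i) ^ (f i)`, indexed by strictly increasing `f : Fin r → ℕ` with `f 0 = 0`,
is summable, with sum `∏_{j=1}^{r-1} P j / (1 - P j)`. -/
theorem summable_prod_pow_strictMono_and_tsum_eq {r : ℕ} (hr : 1 ≤ r) (x : Fin r → ℂ)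
    (P : ℕ → ℂ)
    (hP : ∀ j, P j = ∏ i ∈ Finset.univ.filter (fun i : Fin r => j ≤ (i : ℕ)), x i)
    (hlt : ∀ j, 1 ≤ j → j ≤ r - 1 → ‖P j‖ < 1) :
    Summable (fun f : {f : Fin r → ℕ // StrictMono f ∧ f ⟨0, hr⟩ = 0} =>
        ∏ i, x i ^ (f.1 i)) ∧
    ∑' f : {f : Fin r → ℕ // StrictMono f ∧ f ⟨0, hr⟩ = 0}, ∏ i, x i ^ (f.1 i)
      = ∏ j ∈ Finset.Ico 1 r, P j / (1 - P j) := by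
  obtain ⟨m, rfl⟩ : ∃ m, r = m + 1 := ⟨r - 1, (Nat.succ_pred_eq_of_pos hr).symm⟩
  -- the difference function
  set d : (Fin m → ℕ) → ℕ → ℕ := fun g j => (if h : j < m then g ⟨j, h⟩ else 0) + 1 with hd
  set toF : (Fin m → ℕ) → Fin (m + 1) → ℕ := fun g i => ∑ j ∈ range i.val, d g j with htoF
  have hmono : ∀ g, StrictMono (toF g) := by
    intro g i i' hii
    apply Finset.sum_lt_sum_of_subset (Finset.range_subset_range.mpr hii.le)
      (Finset.mem_range.mpr hii) (by simp) (by simp [hd]) (by intros; positivity)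
  have h0 : ∀ g, toF g ⟨0, hr⟩ = 0 := by intro g; simp [htoF]
  set e : (Fin m → ℕ) ≃ {f : Fin (m + 1) → ℕ // StrictMono f ∧ f ⟨0, hr⟩ = 0} :=
    { toFun := fun g => ⟨toF g, hmono g, h0 g⟩
      invFun := fun f => fun j => f.1 j.succ - f.1 j.castSucc - 1
      left_inv := by
        intro g
        funext j
        have : (toF g) j.succ = (toF g) j.castSucc + d g j.val := by
          simp [htoF, Fin.val_succ, Finset.sum_range_succ]
        simp only [this]
        have := j.isLt
        simp [hd, this]
      right_inv := by
        rintro ⟨f, hm, hf0⟩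
        apply Subtype.ext
        funext i
        show toF (fun j => f j.succ - f j.castSucc - 1) i = f i
        have key : ∀ k (hk : k < m + 1), toF (fun j => f j.succ - f j.castSucc - 1) ⟨k, hk⟩
            = f ⟨k, hk⟩ := by
          intro k
          induction k with
          | zero => intro hk; simpa [htoF] using hf0.symm
          | succ k ihk =>
            intro hk
            have hk' : k < m + 1 := Nat.lt_of_succ_lt hk
            have hkm : k < m := Nat.lt_of_succ_lt_succ hk
            have hlt2 : f ⟨k, hk'⟩ < f ⟨k + 1, hk⟩ := hm (by simp [Fin.lt_def])
            have hs : (Fin.succ (⟨k, hkm⟩ : Fin m)) = (⟨k + 1, hk⟩ : Fin (m + 1)) := rfl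
            have hc : (Fin.castSucc (⟨k, hkm⟩ : Fin m)) = (⟨k, hk'⟩ : Fin (m + 1)) := rfl
            have : toF (fun j => f j.succ - f j.castSucc - 1) ⟨k + 1, hk⟩
                = toF (fun j => f j.succ - f j.castSucc - 1) ⟨k, hk'⟩
                  + d (fun j => f j.succ - f j.castSucc - 1) k := by
              simp [htoF, Finset.sum_range_succ]
            rw [this, ihk hk']
            simp only [hd, dif_pos hkm, hs, hc]
            omega
        obtain ⟨iv, hiv⟩ := i
        exact key iv hiv }
  -- product identity
  have hprod : ∀ g : Fin m → ℕ,
      ∏ i, x i ^ (toF g i) = ∏ j : Fin m, P (j.val + 1) ^ (g j + 1) := by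
    intro g
    have step1 : ∏ i, x i ^ (toF g i) = ∏ i : Fin (m + 1), ∏ j ∈ range i.val, x i ^ d g j := by
      refine Finset.prod_congr rfl fun i _ => ?_
      rw [htoF]
      exact (Finset.prod_pow_eq_pow_sum _ _ _).symm
    rw [step1]
    rw [Finset.prod_comm' (t' := range m)
      (s' := fun j => Finset.univ.filter (fun i : Fin (m + 1) => j < i.val))
      (by
        intro i j
        simp only [Finset.mem_univ, true_and, Finset.mem_range, Finset.mem_filter]
        have := i.isLt
        omega)]
    have inner : ∀ j ∈ range m,
        ∏ i ∈ Finset.univ.filter (fun i : Fin (m + 1) => j < i.val), x i ^ d g j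
          = P (j + 1) ^ d g j := by
      intro j hj
      rw [Finset.prod_pow, hP (j + 1)]
      have hfe : Finset.univ.filter (fun i : Fin (m + 1) => j < i.val)
          = Finset.univ.filter (fun i : Fin (m + 1) => j + 1 ≤ i.val) := by
        apply Finset.filter_congr
        intro i _
        omega
      rw [hfe]
    rw [Finset.prod_congr rfl inner]
    rw [← Fin.prod_univ_eq_prod_range (fun j => P (j + 1) ^ d g j) m]
    refine Finset.prod_congr rfl fun j _ => ?_
    congr 1
    simp [hd, j.isLt]
  -- summability of each geometric factor
  have hnorm : ∀ j : Fin m, Summable fun k : ℕ => ‖P (j.val + 1) ^ (k + 1)‖ := by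
    intro j
    have hPj : ‖P (j.val + 1)‖ < 1 := by
      have := hlt (j.val + 1) (Nat.le_add_left 1 _) (by simp)
      simpa using this
    have : Summable fun k : ℕ => ‖P (j.val + 1)‖ ^ k :=
      summable_geometric_of_lt_one (norm_nonneg _) hPj
    have := this.mul_left ‖P (j.val + 1)‖
    refine this.congr fun k => ?_
    rw [norm_pow, pow_succ, mul_comm]
  obtain ⟨hSum, hTsum⟩ := aux_tsum_pi m (fun j k => P (j.val + 1) ^ (k + 1)) hnorm
  have hgeom : ∀ j : Fin m, ∑' k : ℕ, P (j.val + 1) ^ (k + 1)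
      = P (j.val + 1) / (1 - P (j.val + 1)) := by
    intro j
    have hPj : ‖P (j.val + 1)‖ < 1 := by
      have := hlt (j.val + 1) (Nat.le_add_left 1 _) (by simp)
      simpa using this
    calc ∑' k : ℕ, P (j.val + 1) ^ (k + 1)
        = ∑' k : ℕ, P (j.val + 1) * P (j.val + 1) ^ k := by
          refine tsum_congr fun k => ?_; rw [pow_succ, mul_comm]
      _ = P (j.val + 1) * ∑' k : ℕ, P (j.val + 1) ^ k := tsum_mul_left
      _ = P (j.val + 1) * (1 - P (j.val + 1))⁻¹ := by rw [tsum_geometric_of_norm_lt_one hPj]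
      _ = P (j.val + 1) / (1 - P (j.val + 1)) := (div_eq_mul_inv _ _).symm
  -- final interval rewrite
  have hIco : ∏ j ∈ Finset.Ico 1 (m + 1), P j / (1 - P j)
      = ∏ j : Fin m, P (j.val + 1) / (1 - P (j.val + 1)) := by
    rw [Finset.prod_Ico_eq_prod_range]
    simp only [Nat.add_sub_cancel]
    rw [← Fin.prod_univ_eq_prod_range (fun j => P (1 + j) / (1 - P (1 + j))) m]
    exact Finset.prod_congr rfl fun j _ => by rw [Nat.add_comm 1 j.val]
  constructor
  · rw [← e.summable_iff]
    have hS' : Summable fun g : Fin m → ℕ => ‖∏ i, x i ^ (toF g i)‖ :=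
      hSum.congr fun g => (congrArg norm (hprod g)).symm
    exact hS'.of_norm
  · rw [← e.tsum_eq, hIco]
    have : ∀ g : Fin m → ℕ, ∏ i, x i ^ ((e g).1 i) = ∏ j : Fin m, P (j.val + 1) ^ (g j + 1) :=
      fun g => hprod g
    rw [tsum_congr this, hTsum]
    exact Finset.prod_congr rfl fun j _ => hgeom j
end
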